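/- One-step overcoverage comparison: let S = (S_{L+1},...,S_{n+1}) be a random vector of real scores, τ ∈ {0,...,n-L}, α ∈ (0,1). Then for every i ∈ {L+1,...,n+1}, P(S_{n+1} ≤ Quantile_{1-α}(S)) ≤ P(S_i ≤ Quantile_{1-α+τ/(n-L+1)}(S)) + Ψ_{i-L,τ}(S). -/

import Mathlib

open MeasureTheory
open scoped ENNReal

/-- The `j`-th order statistic (1-indexed) of a finite real vector. -/
noncomputable def orderStat {m : ℕ} (v : Fin m → ℝ) (j : ℕ) : ℝ :=
  ((List.ofFn v).mergeSort (fun x y => x ≤ y)).getD (j - 1) 0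

/-- `Quantile b v` is the `⌈b·m⌉`-th order statistic of `v ∈ ℝ^m`, with the conventions
`Quantile b v = ⊤` if `b > 1` and `Quantile b v = ⊥` if `b ≤ 0`. -/
noncomputable def Quantile {m : ℕ} (b : ℝ) (v : Fin m → ℝ) : EReal :=
  if b > 1 then ⊤ else if b ≤ 0 then ⊥ else ((orderStat v ⌈b * m⌉.toNat : ℝ) : EReal)

/-- The deletion operator `Δ⁰_{k,τ}` of the paper (with `k` and `τ` counts of entries). -/
def delta0 {α : Type*} (m k τ : ℕ) (w : Fin m → α) : Fin (m - τ) → α :=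
  fun i =>
    if i.val < m - τ - k then w ⟨i.val, by have := i.isLt; omega⟩
    else w ⟨i.val + τ, by have := i.isLt; omega⟩

/-- The deletion operator `Δ¹_{k,τ}` of the paper. -/
def delta1 {α : Type*} (m k τ : ℕ) (w : Fin m → α) : Fin (m - τ) → α :=
  fun i =>
    if h : k + τ < m then
      if h2 : i.val < m - τ - k then w ⟨i.val + k + τ, by have := i.isLt; omega⟩
      else w ⟨i.val - (m - τ - k), by have := i.isLt; omega⟩
    else w ⟨(i.val + k + τ - m) % m, Nat.mod_lt _ (by have := i.isLt; omega)⟩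

/-- Total variation distance between the laws of two random elements `U, V` under `P`. -/
noncomputable def dTV {Ω γ : Type*} [MeasurableSpace Ω] [MeasurableSpace γ]
    (P : Measure Ω) (U V : Ω → γ) : ℝ :=
  ⨆ E : {E : Set γ // MeasurableSet E}, |(P (U ⁻¹' E.1)).toReal - (P (V ⁻¹' E.1)).toReal|

/-- The switch coefficient `Ψ_{k,τ}(W)` of a random vector `W` of length `m`. -/
noncomputable def switchCoef {Ω α : Type*} [MeasurableSpace Ω] [MeasurableSpace α]
    (P : Measure Ω) {m : ℕ} (W : Ω → Fin m → α) (k τ : ℕ) : ℝ :=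
  dTV P (fun ω => delta0 m k τ (W ω)) (fun ω => delta1 m k τ (W ω))

/-- The averaged switch coefficient `Ψ̄_τ(W) = (1/m) ∑_{k=1}^m Ψ_{k,τ}(W)`. -/
noncomputable def avgSwitchCoef {Ω α : Type*} [MeasurableSpace Ω] [MeasurableSpace α]
    (P : Measure Ω) {m : ℕ} (W : Ω → Fin m → α) (τ : ℕ) : ℝ :=
  (∑ k ∈ Finset.Icc 1 m, switchCoef P W k τ) / m

/-- Stationarity of a time series `Z = (Z_1,…,Z_{n+1})`. -/
def Stationary {Ω α : Type*} [MeasurableSpace Ω] [MeasurableSpace α]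
    (P : Measure Ω) {n : ℕ} (Z : Ω → Fin (n + 1) → α) : Prop :=
  ∀ (ℓ i : ℕ) (h : i + ℓ ≤ n + 1),
    Measure.map (fun ω (j : Fin ℓ) => Z ω ⟨i + j.val, by have := j.isLt; omega⟩) P =
      Measure.map (fun ω (j : Fin ℓ) => Z ω ⟨j.val, by have := j.isLt; omega⟩) P

/-- Exchangeability of a random vector. -/
def Exchangeable {Ω α : Type*} [MeasurableSpace Ω] [MeasurableSpace α]
    (P : Measure Ω) {n : ℕ} (Z : Ω → Fin (n + 1) → α) : Prop :=
  ∀ σ : Equiv.Perm (Fin (n + 1)),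
    Measure.map (fun ω => Z ω ∘ σ) P = Measure.map Z P

/-- The β-mixing coefficient with lag `τ` of `Z`, defined via an independent copy `Z'`. -/
noncomputable def betaMix {Ω α : Type*} [MeasurableSpace Ω] [MeasurableSpace α]
    (P : Measure Ω) (n : ℕ) (Z Z' : Ω → Fin (n + 1) → α) (τ : ℕ) : ℝ :=
  ⨆ k : Fin (n - τ),
    dTV P
      (fun ω (i : Fin (n + 1 - τ)) =>
        if i.val < k.val + 1 then Z ω ⟨i.val, by have := i.isLt; omega⟩
        else Z ω ⟨i.val + τ, by have := i.isLt; omega⟩)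
      (fun ω (i : Fin (n + 1 - τ)) =>
        if i.val < k.val + 1 then Z ω ⟨i.val, by have := i.isLt; omega⟩
        else Z' ω ⟨i.val + τ, by have := i.isLt; omega⟩)

/-- sorted characterization -/
lemma sorted_char {l : List ℝ} (hs : l.Pairwise (· ≤ ·)) {p : ℝ → Bool}
    (hp : ∀ x y : ℝ, x ≤ y → p y = true → p x = true) {j : ℕ} (hj1 : 1 ≤ j)
    (hj2 : j ≤ l.length) :
    p (l.getD (j - 1) 0) = true ↔ j ≤ l.countP p := by
  have hlt : j - 1 < l.length := by omega
  rw [List.getD_eq_getElem _ _ hlt]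
  constructor
  · intro h
    have htake : (l.take j).countP p = j := by
      rw [List.countP_eq_length.mpr, List.length_take]
      · omega
      · intro a ha
        obtain ⟨t, ht, hEq⟩ := List.mem_iff_getElem.mp ha
        have ht' : t < j := by
          have := ht; rw [List.length_take] at this; omega
        have htl : t < l.length := by
          have := ht; rw [List.length_take] at this; omega
        have hta : (l.take j)[t] = l[t] := by simp [List.getElem_take]
        have hle : l[t] ≤ l[j-1] := by
          rcases Nat.lt_or_ge t (j-1) with h' | h'
          · exact hs.rel_get_of_lt (a := ⟨t, htl⟩) (b := ⟨j-1, hlt⟩) h'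
          · have : t = j - 1 := by omega
            subst this; exact le_rfl
        rw [← hEq, hta]
        exact hp _ _ hle h
    calc j = (l.take j).countP p := htake.symm
      _ ≤ l.countP p := (List.take_sublist _ _).countP_le
  · intro h
    by_contra hc
    have hdrop : (l.drop (j-1)).countP p = 0 := by
      rw [List.countP_eq_zero]
      intro a ha hpa
      obtain ⟨t, ht, hEq⟩ := List.mem_iff_getElem.mp ha
      have htl : j - 1 + t < l.length := by
        have := ht; rw [List.length_drop] at this; omega
      have hta : (l.drop (j-1))[t] = l[j-1+t] := by
        rw [List.getElem_drop]
      have hle : l[j-1] ≤ l[j-1+t] := by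
        rcases Nat.eq_or_lt_of_le (Nat.le_add_right (j-1) t) with h' | h'
        · simp only [← h']; exact le_rfl
        · exact hs.rel_get_of_lt (a := ⟨j-1, hlt⟩) (b := ⟨j-1+t, htl⟩) h'
      exact hc (hp _ _ hle (by rw [← hta, hEq]; exact hpa))
    have : l.countP p ≤ j - 1 := by
      conv_lhs => rw [← List.take_append_drop (j-1) l]
      rw [List.countP_append, hdrop]
      simpa using (List.countP_le_length (p := p)).trans (by rw [List.length_take]; omega)
    omega

lemma countP_ofFn {m : ℕ} (v : Fin m → ℝ) (p : ℝ → Bool) :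
    (List.ofFn v).countP p = (Finset.univ.filter (fun i => p (v i) = true)).card := by
  induction m with
  | zero => simp
  | succ m ih =>
    rw [List.ofFn_succ, List.countP_cons, ih (fun i => v i.succ)]
    rw [Finset.card_filter, Finset.card_filter, Fin.sum_univ_succ]
    simp [add_comm]

/-- countP of mergeSort -/
lemma countP_sort {m : ℕ} (v : Fin m → ℝ) (p : ℝ → Bool) :
    ((List.ofFn v).mergeSort (fun x y => x ≤ y)).countP p
      = (Finset.univ.filter (fun i => p (v i) = true)).card := by
  rw [(List.mergeSort_perm (List.ofFn v) _).countP_eq, countP_ofFn]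

lemma orderStat_char {m : ℕ} (v : Fin m → ℝ) {p : ℝ → Bool}
    (hp : ∀ x y : ℝ, x ≤ y → p y = true → p x = true) {j : ℕ} (hj1 : 1 ≤ j) (hj2 : j ≤ m) :
    p (orderStat v j) = true ↔ j ≤ (Finset.univ.filter (fun i => p (v i) = true)).card := by
  have hs : ((List.ofFn v).mergeSort (fun x y => x ≤ y)).Pairwise (· ≤ ·) := by
    exact List.pairwise_mergeSort' (r := fun x y : ℝ => x ≤ y) _
  have hlen : ((List.ofFn v).mergeSort (fun x y => x ≤ y)).length = m := by
    rw [(List.mergeSort_perm (List.ofFn v) _).length_eq, List.length_ofFn]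
  rw [orderStat, sorted_char hs hp hj1 (by omega), countP_sort]

lemma orderStat_le_iff {m : ℕ} (v : Fin m → ℝ) {j : ℕ} (hj1 : 1 ≤ j) (hj2 : j ≤ m) (c : ℝ) :
    orderStat v j ≤ c ↔ j ≤ (Finset.univ.filter (fun i => v i ≤ c)).card := by
  have := orderStat_char v (p := fun x => decide (x ≤ c))
    (fun x y hxy hy => by simp_all; exact hxy.trans hy) hj1 hj2
  simpa using this

lemma orderStat_lt_iff {m : ℕ} (v : Fin m → ℝ) {j : ℕ} (hj1 : 1 ≤ j) (hj2 : j ≤ m) (c : ℝ) :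
    orderStat v j < c ↔ j ≤ (Finset.univ.filter (fun i => v i < c)).card := by
  have := orderStat_char v (p := fun x => decide (x < c))
    (fun x y hxy hy => by simp_all; exact hxy.trans_lt hy) hj1 hj2
  simpa using this

section Emb
variable {m k τ : ℕ}

/-- index map of `delta0`. -/
def emb0 (m k τ : ℕ) : Fin (m - τ) → Fin m := fun i =>
  if i.val < m - τ - k then ⟨i.val, by have := i.isLt; omega⟩
  else ⟨i.val + τ, by have := i.isLt; omega⟩

/-- index map of `delta1`. -/
def emb1 (m k τ : ℕ) : Fin (m - τ) → Fin m := fun i =>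
  if h : k + τ < m then
    if h2 : i.val < m - τ - k then ⟨i.val + k + τ, by have := i.isLt; omega⟩
    else ⟨i.val - (m - τ - k), by have := i.isLt; omega⟩
  else ⟨(i.val + k + τ - m) % m, Nat.mod_lt _ (by have := i.isLt; omega)⟩

lemma delta0_eq {α : Type*} (w : Fin m → α) : delta0 m k τ w = w ∘ emb0 m k τ := by
  funext i
  simp only [delta0, emb0, Function.comp]
  split <;> rfl

lemma delta1_eq {α : Type*} (w : Fin m → α) : delta1 m k τ w = w ∘ emb1 m k τ := by
  funext i
  simp only [delta1, emb1, Function.comp]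
  split
  · split <;> rfl
  · rfl

lemma emb0_inj : Function.Injective (emb0 m k τ) := by
  intro i j h
  have hi := i.isLt; have hj := j.isLt
  simp only [emb0] at h
  apply Fin.ext
  split_ifs at h <;> simp only [Fin.mk.injEq] at h <;> omega

lemma emb1_inj (hk : k ≤ m) (hτ : τ < m) : Function.Injective (emb1 m k τ) := by
  intro i j h
  have hi := i.isLt; have hj := j.isLt
  simp only [emb1] at h
  apply Fin.ext
  split_ifs at h <;> simp only [Fin.mk.injEq] at h
  · omega
  · omega
  · omega
  · omega
  · rw [Nat.mod_eq_of_lt (by omega), Nat.mod_eq_of_lt (by omega)] at h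
    omega

lemma delta0_last {α : Type*} (w : Fin m → α) (hk : 1 ≤ k) (hτ : τ < m) :
    delta0 m k τ w ⟨m - τ - 1, by omega⟩ = w ⟨m - 1, by omega⟩ := by
  simp only [delta0]
  rw [if_neg (by omega)]
  congr 1
  apply Fin.ext
  simp; omega

lemma delta1_last {α : Type*} (w : Fin m → α) (hk : 1 ≤ k) (hk' : k ≤ m) (hτ : τ < m) :
    delta1 m k τ w ⟨m - τ - 1, by omega⟩ = w ⟨k - 1, by omega⟩ := by
  simp only [delta1]
  split
  · rw [dif_neg (by omega)]
    congr 1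
    apply Fin.ext
    simp; omega
  · congr 1
    apply Fin.ext
    simp only
    rw [Nat.mod_eq_of_lt (by omega)]
    omega

end Emb

section Counts
variable {M a : ℕ}

lemma card_comp_le (v : Fin M → ℝ) (e : Fin a → Fin M) (he : Function.Injective e)
    (p : ℝ → Prop) [DecidablePred p] :
    (Finset.univ.filter (fun i => p (v (e i)))).card
      ≤ (Finset.univ.filter (fun i => p (v i))).card := by
  apply Finset.card_le_card_of_injOn e
  · intro x hx
    simp only [Finset.coe_filter, Finset.mem_filter, Finset.mem_univ, true_and, Set.mem_setOf_eq] at hx ⊢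
    exact hx
  · exact Function.Injective.injOn he

lemma card_le_comp_add (v : Fin M → ℝ) (e : Fin a → Fin M) (he : Function.Injective e)
    (p : ℝ → Prop) [DecidablePred p] :
    (Finset.univ.filter (fun i => p (v i))).card
      ≤ (Finset.univ.filter (fun i => p (v (e i)))).card + (M - a) := by
  classical
  set F := Finset.univ.filter (fun i => p (v i)) with hF
  set im := Finset.univ.image e with him
  have hsplit : F.card ≤ (F ∩ im).card + (F \ im).card := by
    rw [← Finset.card_inter_add_card_sdiff F im]
  have hsub : F ∩ im ⊆ Finset.image e (Finset.univ.filter fun i => p (v (e i))) := by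
    intro j hj
    simp only [Finset.mem_inter, Finset.mem_filter, Finset.mem_univ, true_and, him,
      Finset.mem_image, hF] at hj ⊢
    obtain ⟨hpj, i, hei⟩ := hj
    exact ⟨i, ⟨by rw [hei]; exact hpj, hei⟩⟩
  have h1 : (F ∩ im).card ≤ (Finset.univ.filter (fun i => p (v (e i)))).card :=
    (Finset.card_le_card hsub).trans (Finset.card_image_le)
  have h2 : (F \ im).card ≤ M - a := by
    have : F \ im ⊆ Finset.univ \ im := by
      apply Finset.sdiff_subset_sdiff (Finset.subset_univ _) le_rfl
    refine (Finset.card_le_card this).trans ?_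
    rw [Finset.card_sdiff_of_subset (Finset.subset_univ _), him,
      Finset.card_image_of_injective _ he]
    simp
  omega
end Counts

section OrdComp
variable {M a : ℕ}

lemma orderStat_le_comp (v : Fin M → ℝ) (e : Fin a → Fin M) (he : Function.Injective e)
    {j : ℕ} (hj1 : 1 ≤ j) (hja : j ≤ a) : orderStat v j ≤ orderStat (v ∘ e) j := by
  have haM : a ≤ M := by
    have := Fintype.card_le_of_injective e he
    simpa using this
  rw [orderStat_le_iff v hj1 (hja.trans haM)]
  have h1 : j ≤ (Finset.univ.filter (fun i => (v ∘ e) i ≤ orderStat (v ∘ e) j)).card :=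
    (orderStat_le_iff (v ∘ e) hj1 hja _).mp le_rfl
  exact h1.trans (card_comp_le v e he (fun x => x ≤ orderStat (v ∘ e) j))

lemma orderStat_comp_le (v : Fin M → ℝ) (e : Fin a → Fin M) (he : Function.Injective e)
    {j : ℕ} (hj1 : 1 ≤ j) (hjM : j + (M - a) ≤ M) (haM : a ≤ M) :
    orderStat (v ∘ e) j ≤ orderStat v (j + (M - a)) := by
  have hja : j ≤ a := by omega
  set c := orderStat v (j + (M - a)) with hc
  have h1 : j + (M - a) ≤ (Finset.univ.filter (fun i => v i ≤ c)).card :=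
    (orderStat_le_iff v (by omega) hjM c).mp le_rfl
  have h2 := card_le_comp_add v e he (fun x => x ≤ c)
  rw [orderStat_le_iff (v ∘ e) hj1 hja c]
  have : (Finset.univ.filter (fun i => v (e i) ≤ c)).card
      = (Finset.univ.filter (fun i => (v ∘ e) i ≤ c)).card := rfl
  omega
end OrdComp

section TV

variable {Ω γ : Type*} [MeasurableSpace Ω] [MeasurableSpace γ]
  (P : Measure Ω) [IsProbabilityMeasure P] (U V : Ω → γ)

lemma toReal_le_one (s : Set Ω) : (P s).toReal ≤ 1 := by
  have h := prob_le_one (μ := P) (s := s)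
  calc (P s).toReal ≤ (1 : ℝ≥0∞).toReal := ENNReal.toReal_mono ENNReal.one_ne_top h
    _ = 1 := by simp

lemma dTV_bdd : BddAbove (Set.range fun E : {E : Set γ // MeasurableSet E} =>
    |(P (U ⁻¹' E.1)).toReal - (P (V ⁻¹' E.1)).toReal|) := by
  refine ⟨2, ?_⟩
  rintro x ⟨E, rfl⟩
  have h1 := toReal_le_one P (U ⁻¹' E.1)
  have h2 := toReal_le_one P (V ⁻¹' E.1)
  have h3 : (0:ℝ) ≤ (P (U ⁻¹' E.1)).toReal := ENNReal.toReal_nonneg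
  have h4 : (0:ℝ) ≤ (P (V ⁻¹' E.1)).toReal := ENNReal.toReal_nonneg
  rw [abs_le]; constructor <;> nlinarith

lemma dTV_nonneg : 0 ≤ dTV P U V := by
  have := le_ciSup (dTV_bdd P U V) ⟨∅, MeasurableSet.empty⟩
  simp only [Set.preimage_empty, measure_empty] at this
  simp at this
  exact this

lemma dTV_bound {E : Set γ} (hE : MeasurableSet E) :
    (P (U ⁻¹' E)).toReal ≤ (P (V ⁻¹' E)).toReal + dTV P U V := by
  have h := le_ciSup (dTV_bdd P U V) ⟨E, hE⟩
  have h2 : (P (U ⁻¹' E)).toReal - (P (V ⁻¹' E)).toReal ≤ dTV P U V :=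
    le_trans (le_abs_self _) h
  linarith

end TV

section Meas

lemma measE {d : ℕ} (l : Fin d) (q : ℕ) :
    MeasurableSet {v : Fin d → ℝ | (Finset.univ.filter (fun i => v i < v l)).card < q} := by
  have hmeas : Measurable (fun v : Fin d → ℝ =>
      ∑ i : Fin d, if v i < v l then (1:ℕ) else 0) := by
    apply Finset.measurable_sum
    intro i _
    have hset : MeasurableSet {v : Fin d → ℝ | v i < v l} :=
      measurableSet_lt (measurable_pi_apply i) (measurable_pi_apply l)
    exact Measurable.ite hset measurable_const measurable_const
  have : {v : Fin d → ℝ | (Finset.univ.filter (fun i => v i < v l)).card < q}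
      = (fun v : Fin d → ℝ => ∑ i : Fin d, if v i < v l then (1:ℕ) else 0) ⁻¹' {x | x < q} := by
    ext v
    rw [Set.mem_setOf_eq, Set.mem_preimage, Set.mem_setOf_eq, Finset.card_filter]
  rw [this]
  exact hmeas (by trivial)

end Meas


set_option maxHeartbeats 1000000 in
/-- One-step overcoverage comparison (inequality (10) in the proof of Theorem 3). -/
theorem stmt14 {Ω : Type*} [MeasurableSpace Ω] (P : Measure Ω) [IsProbabilityMeasure P]
    {n L : ℕ} (hL : L ≤ n) (S : Ω → Fin (n - L + 1) → ℝ) (hS : Measurable S)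
    (τ : ℕ) (hτ : τ ≤ n - L) (α : ℝ) (hα : 0 < α) (hα1 : α < 1)
    (i : ℕ) (hi : L + 1 ≤ i) (hi' : i ≤ n + 1) :
    (P {ω | (S ω (Fin.last (n - L)) : EReal) ≤ Quantile (1 - α) (S ω)}).toReal
      ≤ (P {ω | (S ω ⟨i - L - 1, by omega⟩ : EReal)
            ≤ Quantile (1 - α + (τ : ℝ) / ((n : ℝ) - L + 1)) (S ω)}).toReal
        + switchCoef P S (i - L) τ := by
  have hk1 : 1 ≤ i - L := by omega
  have hkM : i - L ≤ n - L + 1 := by omega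
  have hτM : τ + 1 ≤ n - L + 1 := by omega
  have hMcast : ((n : ℝ) - L + 1) = ((n - L + 1 : ℕ) : ℝ) := by
    push_cast [Nat.cast_sub hL]
    ring
  have hMpos : (0:ℝ) < ((n - L + 1 : ℕ) : ℝ) := by
    have : (0:ℕ) < n - L + 1 := by omega
    exact_mod_cast this
  by_cases hb : (1 : ℝ) - α + (τ:ℝ) / ((n:ℝ) - L + 1) ≤ 1
  case neg =>
    have hBuniv : {ω | (S ω ⟨i - L - 1, by omega⟩ : EReal)
        ≤ Quantile (1 - α + (τ : ℝ) / ((n : ℝ) - L + 1)) (S ω)} = Set.univ := by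
      ext ω
      simp only [Set.mem_setOf_eq, Set.mem_univ, iff_true]
      rw [Quantile, if_pos (not_le.mp hb)]
      exact le_top
    rw [hBuniv, measure_univ]
    have h1 := toReal_le_one P {ω | (S ω (Fin.last (n - L)) : EReal) ≤ Quantile (1 - α) (S ω)}
    have h2 : 0 ≤ switchCoef P S (i - L) τ := dTV_nonneg P _ _
    simp only [ENNReal.toReal_one]
    linarith
  case pos =>
    -- arithmetic on the quantile indices
    have hτα : (τ : ℝ) ≤ α * ((n - L + 1 : ℕ) : ℝ) := by
      rw [hMcast] at hb
      have h' : (τ:ℝ) / ((n - L + 1 : ℕ) : ℝ) ≤ α := by linarith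
      rw [div_le_iff₀ hMpos] at h'
      linarith
    have hceil_pos : 0 < ⌈(1 - α) * ((n - L + 1 : ℕ) : ℝ)⌉ :=
      Int.ceil_pos.mpr (mul_pos (by linarith) hMpos)
    have hceil_le : ⌈(1 - α) * ((n - L + 1 : ℕ) : ℝ)⌉ ≤ ((n - L + 1 - τ : ℕ) : ℤ) := by
      apply Int.ceil_le.mpr
      have hcast2 : ((n - L + 1 - τ : ℕ) : ℝ) = ((n - L + 1 : ℕ) : ℝ) - τ := by
        push_cast [Nat.cast_sub (show τ ≤ n - L + 1 by omega)]
        ring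
      rw [Int.cast_natCast, hcast2]
      nlinarith
    set q : ℕ := ⌈(1 - α) * ((n - L + 1 : ℕ) : ℝ)⌉.toNat with hqdef
    have hq1 : 1 ≤ q := by omega
    have hqτM : q + τ ≤ n - L + 1 := by omega
    -- rewriting the two quantiles as order statistics
    have hQ1 : ∀ v : Fin (n - L + 1) → ℝ,
        Quantile (1 - α) v = ((orderStat v q : ℝ) : EReal) := by
      intro v
      rw [Quantile, if_neg (by simp only [gt_iff_lt, not_lt]; linarith),
        if_neg (by simp only [not_le]; linarith)]
    have hQ2 : ∀ v : Fin (n - L + 1) → ℝ,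
        Quantile (1 - α + (τ:ℝ) / ((n:ℝ) - L + 1)) v
          = ((orderStat v (q + τ) : ℝ) : EReal) := by
      intro v
      have hb0 : (0:ℝ) < 1 - α + (τ:ℝ) / ((n:ℝ) - L + 1) := by
        have : (0:ℝ) ≤ (τ:ℝ) / ((n:ℝ) - L + 1) := by
          rw [hMcast]; positivity
        linarith
      rw [Quantile, if_neg (by simp only [gt_iff_lt, not_lt]; exact hb),
        if_neg (by simp only [not_le]; linarith)]
      have hX : ((n - L + 1 : ℕ) : ℝ) ≠ 0 := ne_of_gt hMpos
      have harg : (1 - α + (τ:ℝ) / ((n:ℝ) - L + 1)) * ((n - L + 1 : ℕ) : ℝ)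
          = (1 - α) * ((n - L + 1 : ℕ) : ℝ) + ((τ:ℤ):ℝ) := by
        rw [hMcast, add_mul, div_mul_cancel₀ _ hX]
        push_cast
        ring
      have htn : (⌈(1 - α) * ((n - L + 1 : ℕ) : ℝ)⌉ + (τ:ℤ)).toNat = q + τ := by omega
      rw [harg, Int.ceil_add_intCast, htn]
    -- the event on deleted vectors
    have hd1 : 1 ≤ n - L + 1 - τ := by omega
    set lastI : Fin (n - L + 1 - τ) := ⟨n - L + 1 - τ - 1, by omega⟩ with hlastIdef
    set E : Set (Fin (n - L + 1 - τ) → ℝ) :=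
      {v | (Finset.univ.filter (fun j => v j < v lastI)).card < q} with hEdef
    have hEmeas : MeasurableSet E := measE lastI q
    have hEchar : ∀ v : Fin (n - L + 1 - τ) → ℝ, v ∈ E ↔ v lastI ≤ orderStat v q := by
      intro v
      have hiff := orderStat_lt_iff v hq1 (by omega) (v lastI)
      rw [hEdef, Set.mem_setOf_eq, ← not_le, ← hiff, not_lt]
    -- inclusion for delta0
    have hsub0 : {ω | (S ω (Fin.last (n - L)) : EReal) ≤ Quantile (1 - α) (S ω)}
        ⊆ (fun ω => delta0 (n - L + 1) (i - L) τ (S ω)) ⁻¹' E := by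
      intro ω hω
      rw [Set.mem_setOf_eq, hQ1 (S ω), EReal.coe_le_coe_iff] at hω
      rw [Set.mem_preimage, hEchar]
      have hlastv : (delta0 (n - L + 1) (i - L) τ (S ω)) lastI = S ω (Fin.last (n - L)) := by
        rw [hlastIdef]
        rw [delta0_last (S ω) hk1 (by omega)]
        congr 1
      rw [hlastv]
      refine hω.trans ?_
      rw [delta0_eq (S ω)]
      exact orderStat_le_comp (S ω) (emb0 (n - L + 1) (i - L) τ) emb0_inj hq1 (by omega)
    -- inclusion for delta1
    have hsub1 : (fun ω => delta1 (n - L + 1) (i - L) τ (S ω)) ⁻¹' E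
        ⊆ {ω | (S ω ⟨i - L - 1, by omega⟩ : EReal)
            ≤ Quantile (1 - α + (τ : ℝ) / ((n : ℝ) - L + 1)) (S ω)} := by
      intro ω hω
      rw [Set.mem_preimage, hEchar] at hω
      rw [Set.mem_setOf_eq, hQ2 (S ω), EReal.coe_le_coe_iff]
      have hlastv : (delta1 (n - L + 1) (i - L) τ (S ω)) lastI = S ω ⟨i - L - 1, by omega⟩ := by
        rw [hlastIdef]
        rw [delta1_last (S ω) hk1 hkM (by omega)]
      rw [hlastv] at hω
      refine hω.trans ?_
      have hMMτ : (n - L + 1) - ((n - L + 1) - τ) = τ := by omega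
      have hcomp := orderStat_comp_le (S ω) (emb1 (n - L + 1) (i - L) τ)
        (emb1_inj hkM (by omega)) hq1 (by omega) (by omega)
      rw [hMMτ] at hcomp
      rw [delta1_eq (S ω)]
      exact hcomp
    -- assembling
    calc (P {ω | (S ω (Fin.last (n - L)) : EReal) ≤ Quantile (1 - α) (S ω)}).toReal
        ≤ (P ((fun ω => delta0 (n - L + 1) (i - L) τ (S ω)) ⁻¹' E)).toReal :=
          ENNReal.toReal_mono (measure_ne_top P _) (measure_mono hsub0)
      _ ≤ (P ((fun ω => delta1 (n - L + 1) (i - L) τ (S ω)) ⁻¹' E)).toReal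
            + switchCoef P S (i - L) τ := dTV_bound P _ _ hEmeas
      _ ≤ (P {ω | (S ω ⟨i - L - 1, by omega⟩ : EReal)
            ≤ Quantile (1 - α + (τ : ℝ) / ((n : ℝ) - L + 1)) (S ω)}).toReal
            + switchCoef P S (i - L) τ := by
          have := ENNReal.toReal_mono (measure_ne_top P _) (measure_mono hsub1)
          linarith
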